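/- (Theorem 4.1) Suppose M_hat(ĝ, ĝ8, ĉ, ω̂) = M_C(g, g8, c), where ĝ is a Lorentzian 3×3 real symmetric matrix, ĝ8 and g8 are invertible 8×8 real symmetric matrices, g is an invertible 3×3 real symmetric matrix, and ĉ, ω̂, c ∈ ℝ. Then g is Lorentzian, i.e. g has exactly one negative and two positive eigenvalues. In other words, the spacetime metric appearing in any (g,C)-frame description of a generalised metric coming from the Lorentzian generalised vielbein necessarily has signature (−,+,+). -/

import Mathlib

open Matrix

/-- The (g,C)-frame generalised metric: a 14×14 matrix in 3+3+8 block form. -/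
noncomputable def MC (g : Matrix (Fin 3) (Fin 3) ℝ) (g8 : Matrix (Fin 8) (Fin 8) ℝ) (c : ℝ) :
    Matrix ((Fin 3 ⊕ Fin 3) ⊕ Fin 8) ((Fin 3 ⊕ Fin 3) ⊕ Fin 8) ℝ :=
  |g.det * g8.det| ^ (-(1 : ℝ) / 2) •
    fromBlocks
      (fromBlocks ((1 + c ^ 2 / g.det) • g) ((c / g.det) • g) ((c / g.det) • g)
        ((1 / g.det) • g))
      0 0 g8

/-- The hatted-frame generalised metric, with both a 3-form c and a trivector ω. -/
noncomputable def Mhat (g : Matrix (Fin 3) (Fin 3) ℝ) (g8 : Matrix (Fin 8) (Fin 8) ℝ)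
    (c ω : ℝ) : Matrix ((Fin 3 ⊕ Fin 3) ⊕ Fin 8) ((Fin 3 ⊕ Fin 3) ⊕ Fin 8) ℝ :=
  |g.det * g8.det| ^ (-(1 : ℝ) / 2) •
    fromBlocks
      (fromBlocks (((1 + c * ω) ^ 2 + c ^ 2 / g.det) • g)
        (((1 + c * ω) * ω + c / g.det) • g)
        (((1 + c * ω) * ω + c / g.det) • g)
        ((ω ^ 2 + 1 / g.det) • g))
      0 0 g8

/-- A 3×3 real symmetric (Hermitian) matrix is Lorentzian if it has exactly one negative
and two positive eigenvalues. -/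
def Lorentzian3 (g : Matrix (Fin 3) (Fin 3) ℝ) : Prop :=
  ∃ hg : g.IsHermitian,
    {i | hg.eigenvalues i < 0}.ncard = 1 ∧ {i | 0 < hg.eigenvalues i}.ncard = 2

lemma ncard_setOf_fin3 (p : Fin 3 → Prop) [DecidablePred p] :
    {i | p i}.ncard =
      (if p 0 then 1 else 0) + (if p 1 then 1 else 0) + (if p 2 then 1 else 0) := by
  rw [show {i | p i} = ↑(Finset.univ.filter p) by ext i; simp, Set.ncard_coe_finset,
    Finset.card_filter, Fin.sum_univ_three]

/-- one negative, two positive ⇒ product negative -/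
lemma prod_neg_of_counts (l : Fin 3 → ℝ) (h1 : {i | l i < 0}.ncard = 1)
    (h2 : {i | 0 < l i}.ncard = 2) : l 0 * l 1 * l 2 < 0 := by
  classical
  rw [ncard_setOf_fin3] at h1 h2
  by_cases h0a : l 0 < 0 <;> by_cases h0b : 0 < l 0 <;>
  by_cases h1a : l 1 < 0 <;> by_cases h1b : 0 < l 1 <;>
  by_cases h2a : l 2 < 0 <;> by_cases h2b : 0 < l 2 <;>
  simp_all <;>
  first
    | nlinarith
    | nlinarith [mul_pos h1b h2b]
    | nlinarith [mul_pos h0b h2b]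
    | nlinarith [mul_pos h0b h1b]

/-- product negative and some positive ⇒ counts -/
lemma counts_of_prod_neg (l : Fin 3 → ℝ) (hp : l 0 * l 1 * l 2 < 0)
    (hex : ∃ i, 0 < l i) :
    {i | l i < 0}.ncard = 1 ∧ {i | 0 < l i}.ncard = 2 := by
  classical
  obtain ⟨i, hi⟩ := hex
  have hne0 : l 0 ≠ 0 := by intro h; rw [h] at hp; simp at hp
  have hne1 : l 1 ≠ 0 := by intro h; rw [h] at hp; simp at hp
  have hne2 : l 2 ≠ 0 := by intro h; rw [h] at hp; simp at hp
  rw [ncard_setOf_fin3, ncard_setOf_fin3]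
  rcases hne0.lt_or_gt with h0 | h0 <;>
  rcases hne1.lt_or_gt with h1 | h1 <;>
  rcases hne2.lt_or_gt with h2 | h2 <;>
  simp [h0, h1, h2, lt_asymm h0, lt_asymm h1, lt_asymm h2] <;>
  first
    | nlinarith [mul_pos h1 h2]
    | nlinarith [mul_pos h0 h2]
    | nlinarith [mul_pos h0 h1]
    | nlinarith [mul_pos_of_neg_of_neg h0 h1]
    | nlinarith [mul_pos_of_neg_of_neg h0 h2]
    | nlinarith [mul_pos_of_neg_of_neg h1 h2]
    | (exfalso; fin_cases i <;> simp_all <;> linarith)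

lemma det2x2_hat (A d cc w : ℝ) (hd : d ≠ 0) :
    (A * ((1 + cc * w) ^ 2 + cc ^ 2 / d)) * (A * (w ^ 2 + 1 / d))
      - (A * ((1 + cc * w) * w + cc / d)) ^ 2 = A ^ 2 * (1 / d) := by
  field_simp
  ring

lemma det2x2_C (A d cc : ℝ) (hd : d ≠ 0) :
    (A * (1 + cc ^ 2 / d)) * (A * (1 / d)) - (A * (cc / d)) ^ 2 = A ^ 2 * (1 / d) := by
  field_simp
  ring

lemma eig_mem {g : Matrix (Fin 3) (Fin 3) ℝ} (hg : g.IsHermitian) {v : Fin 3 → ℝ}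
    (hv : v ≠ 0) {t : ℝ} (h : g *ᵥ v = t • v) : ∃ i, hg.eigenvalues i = t := by
  have hdet : (g - t • 1).det = 0 := by
    rw [← Matrix.exists_mulVec_eq_zero_iff]
    refine ⟨v, hv, ?_⟩
    rw [Matrix.sub_mulVec, h, Matrix.smul_mulVec, Matrix.one_mulVec, sub_self]
  have hU : (hg.eigenvectorUnitary : Matrix (Fin 3) (Fin 3) ℝ) *
      star (hg.eigenvectorUnitary : Matrix (Fin 3) (Fin 3) ℝ) = 1 :=
    Matrix.mem_unitaryGroup_iff.mp hg.eigenvectorUnitary.2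
  have hst := hg.spectral_theorem
  rw [RCLike.ofReal_real_eq_id, Function.id_comp] at hst
  simp only [Unitary.conjStarAlgAut_apply, Unitary.coe_star] at hst
  have hone : diagonal hg.eigenvalues - t • (1 : Matrix (Fin 3) (Fin 3) ℝ)
      = diagonal (fun i => hg.eigenvalues i - t) := by
    ext i j
    by_cases hij : i = j <;>
      simp [Matrix.diagonal_apply, Matrix.one_apply, hij]
  have hsplit : g - t • 1 = (hg.eigenvectorUnitary : Matrix (Fin 3) (Fin 3) ℝ) *
      (diagonal hg.eigenvalues - t • 1) *
      star (hg.eigenvectorUnitary : Matrix (Fin 3) (Fin 3) ℝ) := by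
    conv_lhs => rw [hst]
    rw [Matrix.mul_sub, Matrix.sub_mul, Matrix.mul_smul, Matrix.smul_mul,
      Matrix.mul_one, hU]
  rw [hsplit, Matrix.det_mul, Matrix.det_mul] at hdet
  have hdetU : (hg.eigenvectorUnitary : Matrix (Fin 3) (Fin 3) ℝ).det *
      (star (hg.eigenvectorUnitary : Matrix (Fin 3) (Fin 3) ℝ)).det = 1 := by
    rw [← Matrix.det_mul, hU, Matrix.det_one]
  have hdd : (diagonal hg.eigenvalues - t • (1 : Matrix (Fin 3) (Fin 3) ℝ)).det = 0 := by
    nlinarith [hdet, hdetU]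
  rw [hone, Matrix.det_diagonal] at hdd
  obtain ⟨i, _, hi⟩ := Finset.prod_eq_zero_iff.mp hdd
  exact ⟨i, by linarith [sub_eq_zero.mp hi]⟩

set_option maxHeartbeats 2000000 in
theorem stmt_8 (ghat g : Matrix (Fin 3) (Fin 3) ℝ) (ghat8 g8 : Matrix (Fin 8) (Fin 8) ℝ)
    (hghat : Lorentzian3 ghat) (hghat8 : ghat8.IsSymm) (hghat8det : ghat8.det ≠ 0)
    (hg : g.IsSymm) (hgdet : g.det ≠ 0) (hg8 : g8.IsSymm) (hg8det : g8.det ≠ 0)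
    (chat ωhat c : ℝ)
    (heq : Mhat ghat ghat8 chat ωhat = MC g g8 c) :
    Lorentzian3 g := by
  classical
  obtain ⟨hH, hn1, hn2⟩ := hghat
  -- det ghat < 0
  have hdhat : ghat.det < 0 := by
    have hdp := hH.det_eq_prod_eigenvalues
    rw [Fin.prod_univ_three] at hdp
    rw [hdp]
    push_cast
    exact prod_neg_of_counts _ hn1 hn2
  have hdh0 : ghat.det ≠ 0 := ne_of_lt hdhat
  -- scalars
  set ah := |ghat.det * ghat8.det| ^ (-(1 : ℝ) / 2) with hahdef
  set a := |g.det * g8.det| ^ (-(1 : ℝ) / 2) with hadef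
  have ah_pos : 0 < ah := Real.rpow_pos_of_pos (abs_pos.mpr (mul_ne_zero hdh0 hghat8det)) _
  have a_pos : 0 < a := Real.rpow_pos_of_pos (abs_pos.mpr (mul_ne_zero hgdet hg8det)) _
  set ph := ah * ((1 + chat * ωhat) ^ 2 + chat ^ 2 / ghat.det) with hphdef
  set qh := ah * ((1 + chat * ωhat) * ωhat + chat / ghat.det) with hqhdef
  set rh := ah * (ωhat ^ 2 + 1 / ghat.det) with hrhdef
  set p := a * (1 + c ^ 2 / g.det) with hpdef
  set q := a * (c / g.det) with hqdef
  set r := a * (1 / g.det) with hrdef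
  have hr0 : r ≠ 0 := by
    rw [hrdef]
    exact mul_ne_zero (ne_of_gt a_pos) (one_div_ne_zero hgdet)
  -- entry equations
  have E11 : ∀ i j, ph * ghat i j = p * g i j := by
    intro i j
    have h := congrFun (congrFun heq (Sum.inl (Sum.inl i))) (Sum.inl (Sum.inl j))
    simp only [Mhat, MC, Matrix.smul_apply, Matrix.fromBlocks_apply₁₁, smul_eq_mul] at h
    rw [hphdef, hpdef, hahdef, hadef]
    ring_nf
    ring_nf at h
    linarith [h]
  have E12 : ∀ i j, qh * ghat i j = q * g i j := by
    intro i j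
    have h := congrFun (congrFun heq (Sum.inl (Sum.inl i))) (Sum.inl (Sum.inr j))
    simp only [Mhat, MC, Matrix.smul_apply, Matrix.fromBlocks_apply₁₁,
      Matrix.fromBlocks_apply₁₂, smul_eq_mul] at h
    rw [hqhdef, hqdef, hahdef, hadef]
    ring_nf
    ring_nf at h
    linarith [h]
  have E22 : ∀ i j, rh * ghat i j = r * g i j := by
    intro i j
    have h := congrFun (congrFun heq (Sum.inl (Sum.inr i))) (Sum.inl (Sum.inr j))
    simp only [Mhat, MC, Matrix.smul_apply, Matrix.fromBlocks_apply₁₁,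
      Matrix.fromBlocks_apply₂₂, smul_eq_mul] at h
    rw [hrhdef, hrdef, hahdef, hadef]
    ring_nf
    ring_nf at h
    linarith [h]
  -- g = μ • ghat
  set μ := rh / r with hμdef
  have hgmu : g = μ • ghat := by
    ext i j
    have h := E22 i j
    have : g i j = (rh * ghat i j) / r := by
      rw [h]
      field_simp
    rw [Matrix.smul_apply, smul_eq_mul, hμdef, this]
    ring
  -- nonzero entry of ghat
  have hgne : ∃ i j, ghat i j ≠ 0 := by
    by_contra hcon
    push_neg at hcon
    have hz : ghat = 0 := by ext i j; exact hcon i j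
    rw [hz] at hdh0
    simp [Matrix.det_zero] at hdh0
  obtain ⟨i0, j0, hij⟩ := hgne
  have hentry : g i0 j0 = μ * ghat i0 j0 := by rw [hgmu]; simp
  have hP : ph = p * μ := by
    refine mul_right_cancel₀ hij ?_
    rw [E11 i0 j0, hentry]; ring
  have hQ : qh = q * μ := by
    refine mul_right_cancel₀ hij ?_
    rw [E12 i0 j0, hentry]; ring
  -- determinant relation
  have hdet3 : g.det = μ ^ 3 * ghat.det := by
    rw [hgmu, Matrix.det_smul]
    norm_num
  have hμ0 : μ ≠ 0 := by
    intro h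
    rw [h] at hdet3
    norm_num at hdet3
    exact hgdet hdet3
  -- the 2x2 determinant identity
  have idh : ph * rh - qh ^ 2 = ah ^ 2 * (1 / ghat.det) := by
    rw [hphdef, hqhdef, hrhdef]
    exact det2x2_hat ah ghat.det chat ωhat hdh0
  have idc : p * r - q ^ 2 = a ^ 2 * (1 / g.det) := by
    rw [hpdef, hqdef, hrdef]
    exact det2x2_C a g.det c hgdet
  have hR : rh = r * μ := by
    rw [hμdef, mul_comm, div_mul_cancel₀ _ hr0]
  clear_value ah a ph qh rh p q r μ
  have key : ah ^ 2 * (1 / ghat.det) = μ ^ 2 * (a ^ 2 * (1 / g.det)) := by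
    rw [← idh, ← idc, hP, hQ, hR]
    ring
  -- deduce μ > 0
  have key2 : ah ^ 2 * μ ^ 3 = a ^ 2 * μ ^ 2 := by
    rw [hdet3] at key
    field_simp [hdh0, hμ0] at key
    have h4 : (ah ^ 2 * μ ^ 3) * ghat.det = (a ^ 2 * μ ^ 2) * ghat.det := by
      linear_combination (μ ^ 2 * ghat.det) * key
    exact mul_right_cancel₀ hdh0 h4
  have key3 : ah ^ 2 * μ = a ^ 2 := by
    have h2 : (ah ^ 2 * μ) * μ ^ 2 = a ^ 2 * μ ^ 2 := by
      rw [← key2]; ring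
    exact mul_right_cancel₀ (pow_ne_zero 2 hμ0) h2
  have μpos : 0 < μ := by
    nlinarith [pow_pos ah_pos 2, pow_pos a_pos 2]
  have hdgneg : g.det < 0 := by
    rw [hdet3]
    nlinarith [pow_pos μpos 3]
  -- g is Hermitian
  have hgH : g.IsHermitian := by
    rw [Matrix.IsHermitian, Matrix.conjTranspose_eq_transpose_of_trivial]
    exact hg
  refine ⟨hgH, ?_⟩
  -- ghat has a positive eigenvalue; transfer to g
  have hpos_set : {i | 0 < hH.eigenvalues i}.Nonempty :=
    Set.nonempty_of_ncard_ne_zero (by rw [hn2]; norm_num)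
  obtain ⟨jp, hjp⟩ := hpos_set
  have hbne : hH.eigenvectorBasis jp ≠ 0 := hH.eigenvectorBasis.orthonormal.ne_zero jp
  have hvne : (⇑(hH.eigenvectorBasis jp) : Fin 3 → ℝ) ≠ 0 := by
    intro hz
    apply hbne
    ext k
    exact congrFun hz k
  have hveig : g *ᵥ ⇑(hH.eigenvectorBasis jp)
      = (μ * hH.eigenvalues jp) • ⇑(hH.eigenvectorBasis jp) := by
    rw [hgmu, Matrix.smul_mulVec, hH.mulVec_eigenvectorBasis, smul_smul]
  obtain ⟨ip, hip⟩ := eig_mem hgH hvne hveig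
  have hprod : hgH.eigenvalues 0 * hgH.eigenvalues 1 * hgH.eigenvalues 2 < 0 := by
    have hdp := hgH.det_eq_prod_eigenvalues
    rw [Fin.prod_univ_three] at hdp
    push_cast at hdp
    rw [hdp] at hdgneg
    exact hdgneg
  exact counts_of_prod_neg _ hprod ⟨ip, by rw [hip]; exact mul_pos μpos hjp⟩
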